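/- The following are equivalent: (i) for every g ∈ G and every w ∈ ℋ, a_k(g|w) converges (nondecreasingly) to p(g|w) as k → ∞; (ii) for every w ∈ ℋ, a_k(w) := Σ_{g∈G} a_k(g|w) converges (nondecreasingly) to 1 as k → ∞. -/

import Mathlib

open Filter

/-- `a_k(g|w) := inf{ p(g|z) : z ∈ ℋ, z_{−i} = w_{−i} for 1 ≤ i ≤ k }`; histories are
indexed so that `w n` is the paper's `w_{−(n+1)}`. -/
noncomputable def infKernel {G : Type*} (H : Set (ℕ → G)) (p : G → (ℕ → G) → ℝ)
    (k : ℕ) (g : G) (w : ℕ → G) : ℝ :=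
  sInf (p g '' {z ∈ H | ∀ i : ℕ, i < k → z i = w i})

section aux

variable {G : Type*} (H : Set (ℕ → G)) (p : G → (ℕ → G) → ℝ)
  {w : ℕ → G}

lemma infKernel_mem_set (hw : w ∈ H) (k : ℕ) : w ∈ {z ∈ H | ∀ i : ℕ, i < k → z i = w i} :=
  ⟨hw, fun _ _ => rfl⟩

lemma infKernel_bddBelow (hnn : ∀ g, ∀ w ∈ H, 0 ≤ p g w) (k : ℕ) (g : G) :
    BddBelow (p g '' {z ∈ H | ∀ i : ℕ, i < k → z i = w i}) := by
  refine ⟨0, ?_⟩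
  rintro x ⟨z, hz, rfl⟩
  exact hnn g z hz.1

lemma infKernel_nonempty (hw : w ∈ H) (k : ℕ) (g : G) :
    (p g '' {z ∈ H | ∀ i : ℕ, i < k → z i = w i}).Nonempty :=
  ⟨p g w, Set.mem_image_of_mem _ (infKernel_mem_set H hw k)⟩

lemma infKernel_nonneg (hnn : ∀ g, ∀ w ∈ H, 0 ≤ p g w) (hw : w ∈ H) (k : ℕ) (g : G) : 0 ≤ infKernel H p k g w := by
  refine le_csInf (infKernel_nonempty H p hw k g) ?_
  rintro x ⟨z, hz, rfl⟩
  exact hnn g z hz.1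

lemma infKernel_le (hnn : ∀ g, ∀ w ∈ H, 0 ≤ p g w) (hw : w ∈ H) (k : ℕ) (g : G) : infKernel H p k g w ≤ p g w :=
  csInf_le (infKernel_bddBelow H p hnn k g)
    (Set.mem_image_of_mem _ (infKernel_mem_set H hw k))

lemma infKernel_mono (hnn : ∀ g, ∀ w ∈ H, 0 ≤ p g w) (hw : w ∈ H) (g : G) : Monotone (fun k => infKernel H p k g w) := by
  intro k l hkl
  refine csInf_le_csInf (infKernel_bddBelow H p hnn k g)
    (infKernel_nonempty H p hw l g) (Set.image_mono ?_)
  rintro z ⟨hz, hagree⟩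
  exact ⟨hz, fun i hi => hagree i (lt_of_lt_of_le hi hkl)⟩

lemma infKernel_summable (hnn : ∀ g, ∀ w ∈ H, 0 ≤ p g w) (hw : w ∈ H) (hsum : ∀ w ∈ H, HasSum (fun g => p g w) 1) (k : ℕ) :
    Summable (fun g => infKernel H p k g w) :=
  Summable.of_nonneg_of_le (fun g => infKernel_nonneg H p hnn hw k g)
    (fun g => infKernel_le H p hnn hw k g) ⟨1, hsum w hw⟩

end aux

theorem stmt15 {G : Type*} [Countable G] (H : Set (ℕ → G)) (hH : H.Nonempty)
    (p : G → (ℕ → G) → ℝ)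
    (hnn : ∀ g, ∀ w ∈ H, 0 ≤ p g w)
    (hsum : ∀ w ∈ H, HasSum (fun g => p g w) 1) :
    ((∀ g : G, ∀ w ∈ H, Monotone (fun k => infKernel H p k g w) ∧
        Tendsto (fun k => infKernel H p k g w) atTop (nhds (p g w)))
      ↔
     (∀ w ∈ H, Monotone (fun k => ∑' g : G, infKernel H p k g w) ∧
        Tendsto (fun k => ∑' g : G, infKernel H p k g w) atTop (nhds 1))) := by
  constructor
  · intro hi w hw
    have hsummable := infKernel_summable H p hnn hw hsum
    set s : ℕ → ℝ := fun k => ∑' g : G, infKernel H p k g w with hs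
    have hsmono : Monotone s := by
      intro k l hkl
      exact Summable.tsum_le_tsum (fun g => infKernel_mono H p hnn hw g hkl)
        (hsummable k) (hsummable l)
    have hs1 : ∀ k, s k ≤ 1 := by
      intro k
      have h := Summable.tsum_le_tsum (fun g => infKernel_le H p hnn hw k g)
        (hsummable k) ⟨1, hsum w hw⟩
      rwa [(hsum w hw).tsum_eq] at h
    refine ⟨hsmono, ?_⟩
    have hbddA : BddAbove (Set.range s) := by
      refine ⟨1, ?_⟩
      rintro x ⟨k, rfl⟩
      exact hs1 k
    have htend := tendsto_atTop_ciSup hsmono hbddA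
    have hsupeq : ⨆ k, s k = 1 := by
      refine le_antisymm (ciSup_le hs1) ?_
      refine le_of_tendsto (hsum w hw) (Eventually.of_forall fun F => ?_)
      have hF : Tendsto (fun k => ∑ g ∈ F, infKernel H p k g w) atTop
          (nhds (∑ g ∈ F, p g w)) :=
        tendsto_finset_sum F (fun g _ => (hi g w hw).2)
      refine le_of_tendsto hF (Eventually.of_forall fun k => ?_)
      calc ∑ g ∈ F, infKernel H p k g w
          ≤ s k := Summable.sum_le_tsum F (fun g _ => infKernel_nonneg H p hnn hw k g)
            (hsummable k)
        _ ≤ ⨆ k, s k := le_ciSup hbddA k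
    rwa [hsupeq] at htend
  · intro hii g w hw
    have hsummable := infKernel_summable H p hnn hw hsum
    refine ⟨infKernel_mono H p hnn hw g, ?_⟩
    have hsumm_p : Summable (fun g => p g w) := ⟨1, hsum w hw⟩
    have hd : ∀ k, p g w - infKernel H p k g w ≤ 1 - ∑' g : G, infKernel H p k g w := by
      intro k
      have hsub : Summable (fun g' => p g' w - infKernel H p k g' w) :=
        hsumm_p.sub (hsummable k)
      have hle1 : p g w - infKernel H p k g w
          ≤ ∑' g' : G, (p g' w - infKernel H p k g' w) :=
        Summable.le_tsum hsub g (fun g' _ => sub_nonneg.2 (infKernel_le H p hnn hw k g'))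
      rwa [Summable.tsum_sub hsumm_p (hsummable k), (hsum w hw).tsum_eq] at hle1
    have hzero : Tendsto (fun k => p g w - infKernel H p k g w) atTop (nhds 0) := by
      have hlim : Tendsto (fun k => 1 - ∑' g : G, infKernel H p k g w) atTop (nhds 0) := by
        have := (tendsto_const_nhds : Tendsto (fun _ : ℕ => (1:ℝ)) atTop (nhds 1)).sub (hii w hw).2
        simpa using this
      exact squeeze_zero (fun k => sub_nonneg.2 (infKernel_le H p hnn hw k g)) hd hlim
    have := (tendsto_const_nhds : Tendsto (fun _ : ℕ => p g w) atTop (nhds (p g w))).sub hzero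
    simpa using this
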